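/- arXiv:2502.10769 — 5 statements merged into one kernel-verified Lean document; each statement's English description precedes it below -/
import Mathlib

section
/- Let R be a commutative ring and I an ideal of R. Let u ∈ (R,I)⟨X_1,…,X_n⟩ satisfy u(0) = 0 and suppose every coefficient of u lies in √I. Then the formal power series ∑_{i≥0} (−1)^i u^i (well-defined since u has zero constant term) belongs to (R,I)⟨X_1,…,X_n⟩, and (1 + u)·∑_{i≥0} (−1)^i u^i = 1; in particular 1 + u is a unit of (R,I)⟨X_1,…,X_n⟩. -/
open MvPowerSeries

/-- Membership in the Tate algebra `(R,I)⟨X_1,…,X_n⟩`: for every `k ≥ 1`, all but finitely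
many coefficients lie in `I ^ k`. -/
def TateMem {n : ℕ} {R : Type*} [CommRing R] (I : Ideal R)
    (f : MvPowerSeries (Fin n) R) : Prop :=
  ∀ k : ℕ, 1 ≤ k → {d : Fin n →₀ ℕ | MvPowerSeries.coeff d f ∉ I ^ k}.Finite

/-- The formal partial derivative of a multivariate power series with respect to `X j`. -/
noncomputable def psDeriv {n : ℕ} {R : Type*} [CommRing R] (j : Fin n)
    (f : MvPowerSeries (Fin n) R) : MvPowerSeries (Fin n) R :=
  fun d => (d j + 1 : ℕ) * MvPowerSeries.coeff (d + Finsupp.single j 1) f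

/-- Substitution of the power series `G j` for the variables `X j` in `f`
(the intended use is when each `G j` has zero constant coefficient, in which case
the `finsum` below is a finite sum for each fixed monomial). -/
noncomputable def psSubst {n : ℕ} {R : Type*} [CommRing R]
    (G : Fin n → MvPowerSeries (Fin n) R) (f : MvPowerSeries (Fin n) R) :
    MvPowerSeries (Fin n) R :=
  fun e => ∑ᶠ d : Fin n →₀ ℕ,
    MvPowerSeries.coeff d f * MvPowerSeries.coeff e (∏ j, G j ^ d j)

/-- `f` is a unit of the Tate algebra `(R,I)⟨X_1,…,X_n⟩`. -/
def TateUnit {n : ℕ} {R : Type*} [CommRing R] (I : Ideal R)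
    (f : MvPowerSeries (Fin n) R) : Prop :=
  TateMem I f ∧ ∃ g, TateMem I g ∧ f * g = 1

/-- The Jacobian conjecture `JC(R,n)`. -/
def JC (R : Type*) [CommRing R] (n : ℕ) : Prop :=
  ∀ F : Fin n → MvPolynomial (Fin n) R,
    IsUnit (Matrix.det (Matrix.of fun i j => MvPolynomial.pderiv j (F i))) →
    ∃ G : Fin n → MvPolynomial (Fin n) R,
      (∀ i, MvPolynomial.bind₁ G (F i) = MvPolynomial.X i) ∧
      (∀ i, MvPolynomial.bind₁ F (G i) = MvPolynomial.X i)

/-- The Tate-Jacobian conjecture `TJC(R,I,n)`. -/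
def TJC (R : Type*) [CommRing R] (I : Ideal R) (n : ℕ) : Prop :=
  ∀ F : Fin n → MvPowerSeries (Fin n) R,
    (∀ i, TateMem I (F i)) →
    (∀ i, MvPowerSeries.constantCoeff (F i) = 0) →
    TateUnit I (Matrix.det (Matrix.of fun i j => psDeriv j (F i))) →
    ∃ G : Fin n → MvPowerSeries (Fin n) R,
      (∀ i, TateMem I (G i)) ∧
      (∀ i, MvPowerSeries.constantCoeff (G i) = 0) ∧
      (∀ i, psSubst G (F i) = MvPowerSeries.X i) ∧
      (∀ i, psSubst F (G i) = MvPowerSeries.X i)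

/-- The formal power series `∑_{i ≥ 0} (-1)^i u^i`, defined coefficientwise (the sum of the
coefficients of the `(-1)^i * u^i` at each monomial is finite when `u(0) = 0`). -/
noncomputable def geomInv {n : ℕ} {R : Type*} [CommRing R]
    (u : MvPowerSeries (Fin n) R) : MvPowerSeries (Fin n) R :=
  fun e => ∑ᶠ i : ℕ, MvPowerSeries.coeff e ((-1) ^ i * u ^ i)

section TateAux

variable {n : ℕ} {R : Type*} [CommRing R] (I : Ideal R)

theorem tateMem_one : TateMem I (1 : MvPowerSeries (Fin n) R) := by
  classical
  intro k hk
  apply Set.Finite.subset (Set.finite_singleton 0)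
  intro d hd
  simp only [Set.mem_setOf_eq] at hd
  simp only [Set.mem_singleton_iff]
  by_contra h
  exact hd (by rw [MvPowerSeries.coeff_one, if_neg h]; exact Ideal.zero_mem _)

theorem tateMem_mul {f g : MvPowerSeries (Fin n) R} (hf : TateMem I f) (hg : TateMem I g) :
    TateMem I (f * g) := by
  classical
  intro k hk
  apply Set.Finite.subset (Set.Finite.image2 (· + ·) (hf k hk) (hg k hk))
  intro e he
  simp only [Set.mem_setOf_eq] at he
  by_contra hne
  apply he
  rw [MvPowerSeries.coeff_mul]
  apply Ideal.sum_mem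
  intro p hp
  rcases em (MvPowerSeries.coeff p.1 f ∈ I ^ k) with h1 | h1
  · exact Ideal.mul_mem_right _ _ h1
  rcases em (MvPowerSeries.coeff p.2 g ∈ I ^ k) with h2 | h2
  · exact Ideal.mul_mem_left _ _ h2
  · exfalso
    apply hne
    rw [Finset.HasAntidiagonal.mem_antidiagonal] at hp
    rw [← hp]
    exact Set.mem_image2_of_mem h1 h2

theorem tateMem_pow {f : MvPowerSeries (Fin n) R} (hf : TateMem I f) (i : ℕ) :
    TateMem I (f ^ i) := by
  induction i with
  | zero => simpa using tateMem_one I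
  | succ i ih => rw [pow_succ]; exact tateMem_mul I ih hf

theorem tateMem_add {f g : MvPowerSeries (Fin n) R} (hf : TateMem I f) (hg : TateMem I g) :
    TateMem I (f + g) := by
  intro k hk
  apply Set.Finite.subset ((hf k hk).union (hg k hk))
  intro e he
  simp only [Set.mem_setOf_eq] at he
  by_contra hne
  simp only [Set.mem_union, Set.mem_setOf_eq, not_or, not_not] at hne
  exact he (by rw [map_add]; exact Ideal.add_mem _ hne.1 hne.2)

theorem coeff_mem_mul {f g : MvPowerSeries (Fin n) R} {P Q : Ideal R}
    (hf : ∀ d, MvPowerSeries.coeff d f ∈ P) (hg : ∀ d, MvPowerSeries.coeff d g ∈ Q) :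
    ∀ d, MvPowerSeries.coeff d (f * g) ∈ P * Q := by
  classical
  intro d
  rw [MvPowerSeries.coeff_mul]
  exact Ideal.sum_mem _ fun p _ => Ideal.mul_mem_mul (hf _) (hg _)

theorem coeff_mem_pow {f : MvPowerSeries (Fin n) R} {P : Ideal R}
    (hf : ∀ d, MvPowerSeries.coeff d f ∈ P) (i : ℕ) :
    ∀ d, MvPowerSeries.coeff d (f ^ i) ∈ P ^ i := by
  induction i with
  | zero => intro d; simp [Ideal.one_eq_top]
  | succ i ih => intro d; rw [pow_succ, pow_succ]; exact coeff_mem_mul ih hf d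

theorem sup_pow_le_aux {A : Ideal R} {m k : ℕ} (hA : A ^ m ≤ I) :
    (I + A) ^ (k + m * k) ≤ I ^ k := by
  rw [add_pow, Ideal.sum_eq_sup, Finset.sup_le_iff]
  intro i hi
  refine Ideal.mul_le_left.trans ?_
  rcases le_or_gt k i with h | h
  · exact Ideal.mul_le_left.trans (Ideal.pow_le_pow_right h)
  · refine Ideal.mul_le_right.trans ?_
    have h1 : m * k ≤ k + m * k - i := by omega
    refine (Ideal.pow_le_pow_right h1).trans ?_
    rw [pow_mul]
    exact Ideal.pow_right_mono hA k

theorem degree_add_aux (a b : Fin n →₀ ℕ) :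
    Finsupp.degree (a + b) = Finsupp.degree a + Finsupp.degree b := by
  simp only [Finsupp.degree_eq_weight_one, map_add]

end TateAux

/-- If `u ∈ (R,I)⟨X_1,…,X_n⟩` has `u(0) = 0` and all coefficients in `√I`, then
`∑_{i ≥ 0} (-1)^i u^i` lies in the Tate algebra, `(1 + u) ⬝ ∑_{i ≥ 0} (-1)^i u^i = 1`, and in
particular `1 + u` is a unit of the Tate algebra. -/
theorem stmt_6 (R : Type*) [CommRing R] (I : Ideal R) (n : ℕ)
    (u : MvPowerSeries (Fin n) R) (huT : TateMem I u)
    (hu0 : MvPowerSeries.constantCoeff u = 0)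
    (hurad : ∀ d : Fin n →₀ ℕ, MvPowerSeries.coeff d u ∈ I.radical) :
    TateMem I (geomInv u) ∧ (1 + u) * geomInv u = 1 ∧ TateUnit I (1 + u) := by
  classical
  -- vanishing of coefficients of high powers
  have hzero : ∀ (e : Fin n →₀ ℕ) (i : ℕ), Finsupp.degree e < i →
      MvPowerSeries.coeff e (u ^ i) = 0 := by
    intro e i hi
    exact MvPowerSeries.coeff_eq_zero_of_constantCoeff_nilpotent (m := 1)
      (by simp [hu0]) (by omega)
  -- coefficients of `(-1)^i * u^i`
  have hterm : ∀ (e : Fin n →₀ ℕ) (i : ℕ),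
      MvPowerSeries.coeff e (((-1 : MvPowerSeries (Fin n) R)) ^ i * u ^ i)
        = (-1 : R) ^ i * MvPowerSeries.coeff e (u ^ i) := by
    intro e i
    have hC : ((-1 : MvPowerSeries (Fin n) R)) ^ i
        = MvPowerSeries.C ((-1 : R) ^ i) := by
      rw [map_pow, map_neg, map_one]
    rw [hC, MvPowerSeries.coeff_C_mul]
  -- coefficient of geomInv as a finite sum
  have hg : ∀ (e : Fin n →₀ ℕ) (N : ℕ), Finsupp.degree e < N →
      MvPowerSeries.coeff e (geomInv u)
        = ∑ i ∈ Finset.range N, (-1 : R) ^ i * MvPowerSeries.coeff e (u ^ i) := by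
    intro e N hN
    have h1 : MvPowerSeries.coeff e (geomInv u)
        = ∑ᶠ i : ℕ, MvPowerSeries.coeff e ((-1) ^ i * u ^ i) := rfl
    rw [h1, finsum_eq_finset_sum_of_support_subset _ (s := Finset.range N)]
    · exact Finset.sum_congr rfl fun i _ => hterm e i
    · intro i hi
      simp only [Function.mem_support, ne_eq] at hi
      simp only [Finset.coe_range, Set.mem_Iio]
      by_contra hiN
      exact hi (by rw [hterm, hzero e i (by omega), mul_zero])
  -- the multiplicative identity
  have hmul : (1 + u) * geomInv u = 1 := by
    ext e
    set N := Finsupp.degree e + 1 with hN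
    set S : MvPowerSeries (Fin n) R := ∑ i ∈ Finset.range N, (-u) ^ i with hS
    have hstep1 : MvPowerSeries.coeff e ((1 + u) * geomInv u)
        = MvPowerSeries.coeff e ((1 + u) * S) := by
      rw [MvPowerSeries.coeff_mul, MvPowerSeries.coeff_mul]
      apply Finset.sum_congr rfl
      intro p hp
      rw [Finset.HasAntidiagonal.mem_antidiagonal] at hp
      congr 1
      have hdeg : Finsupp.degree p.2 ≤ Finsupp.degree e := by
        rw [← hp, degree_add_aux]; omega
      rw [hg p.2 N (by omega), hS, map_sum]
      apply Finset.sum_congr rfl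
      intro i _
      rw [neg_pow u i, hterm]
    have hstep2 : (1 + u) * S = 1 - (-u) ^ N := by
      have h := geom_sum_mul (-u) N
      rw [hS]
      linear_combination -h
    rw [hstep1, hstep2, map_sub]
    have : MvPowerSeries.coeff e ((-u) ^ N) = 0 := by
      rw [neg_pow u N, hterm, hzero e N (by omega), mul_zero]
    rw [this, sub_zero]
  -- Tate algebra membership of geomInv
  set B := {d : Fin n →₀ ℕ | MvPowerSeries.coeff d u ∉ I ^ 1} with hB
  have hBfin : B.Finite := huT 1 le_rfl
  set A := Ideal.span ((fun d => MvPowerSeries.coeff d u) '' B) with hA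
  have hAfg : A.FG := Submodule.fg_span (hBfin.image _)
  have hArad : A ≤ I.radical := by
    rw [hA, Ideal.span_le]
    rintro x ⟨d, -, rfl⟩
    exact hurad d
  obtain ⟨m, hm⟩ := Ideal.exists_pow_le_of_le_radical_of_fg hArad hAfg
  have hcoeffJ : ∀ d, MvPowerSeries.coeff d u ∈ I + A := by
    intro d
    by_cases hd : MvPowerSeries.coeff d u ∈ I ^ 1
    · exact Ideal.mem_sup_left (by rwa [pow_one] at hd)
    · exact Ideal.mem_sup_right (Ideal.subset_span ⟨d, hd, rfl⟩)
  have htail : ∀ k, ∀ i, k + m * k ≤ i → ∀ d, MvPowerSeries.coeff d (u ^ i) ∈ I ^ k := by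
    intro k i hi d
    have hrw : u ^ i = u ^ (k + m * k) * u ^ (i - (k + m * k)) := by
      rw [← pow_add]; congr 1; omega
    rw [hrw, MvPowerSeries.coeff_mul]
    refine Ideal.sum_mem _ fun p _ => Ideal.mul_mem_right _ _ ?_
    exact sup_pow_le_aux I hm (coeff_mem_pow hcoeffJ (k + m * k) p.1)
  have hTg : TateMem I (geomInv u) := by
    intro k hk
    set M := k + m * k with hM
    have hfin : (⋃ i ∈ Finset.range M,
        {d : Fin n →₀ ℕ | MvPowerSeries.coeff d (u ^ i) ∉ I ^ k}).Finite :=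
      Set.Finite.biUnion (Finset.range M).finite_toSet
        (fun i _ => tateMem_pow I huT i k hk)
    apply Set.Finite.subset hfin
    intro e he
    simp only [Set.mem_setOf_eq] at he
    by_contra hne
    simp only [Set.mem_iUnion, Set.mem_setOf_eq, not_exists, not_and, not_not,
      Finset.mem_range, exists_prop] at hne
    apply he
    rw [hg e (Finsupp.degree e + 1) (by omega)]
    refine Ideal.sum_mem _ fun i _ => ?_
    rcases lt_or_ge i M with hiM | hiM
    · exact Ideal.mul_mem_left _ _ (hne i hiM)
    · exact Ideal.mul_mem_left _ _ (htail k i hiM e)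
  refine ⟨hTg, hmul, tateMem_add I (tateMem_one I) huT, geomInv u, hTg, hmul⟩
end

section
/- Let R be a commutative ring and I an ideal of R. Let u ∈ (R,I)⟨X_1,…,X_n⟩ be such that every coefficient of u lies in √I. Then for every N ≥ 1 there exists a ≥ 1 such that every coefficient of u^a lies in I^N. -/
open MvPowerSeries

/-- The ideal of power series all of whose coefficients lie in `J`. -/
def coeffIdeal {n : ℕ} {R : Type*} [CommRing R] (J : Ideal R) :
    Ideal (MvPowerSeries (Fin n) R) where
  carrier := {f | ∀ d, MvPowerSeries.coeff d f ∈ J}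
  add_mem' := fun hf hg d => by rw [map_add]; exact J.add_mem (hf d) (hg d)
  zero_mem' := fun d => by simp
  smul_mem' := fun c f hf d => by
    rw [smul_eq_mul, MvPowerSeries.coeff_mul]
    exact J.sum_mem fun p _ => J.mul_mem_left _ (hf p.2)

lemma coeffIdeal_mul_mem {n : ℕ} {R : Type*} [CommRing R] {J₁ J₂ : Ideal R}
    {f g : MvPowerSeries (Fin n) R} (hf : f ∈ coeffIdeal J₁) (hg : g ∈ coeffIdeal J₂) :
    f * g ∈ coeffIdeal (J₁ * J₂) := by
  intro d
  rw [MvPowerSeries.coeff_mul]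
  exact Ideal.sum_mem _ fun p _ => Ideal.mul_mem_mul (hf p.1) (hg p.2)

lemma coeffIdeal_pow_mem {n : ℕ} {R : Type*} [CommRing R] {J : Ideal R}
    {f : MvPowerSeries (Fin n) R} (hf : f ∈ coeffIdeal J) (N : ℕ) :
    f ^ N ∈ coeffIdeal (J ^ N) := by
  induction N with
  | zero => intro d; simp
  | succ k ih =>
      rw [pow_succ, pow_succ]
      exact coeffIdeal_mul_mem ih hf

lemma monomial_pow' {n : ℕ} {R : Type*} [CommRing R] (d : Fin n →₀ ℕ) (c : R) (k : ℕ) :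
    (MvPowerSeries.monomial d c) ^ k = MvPowerSeries.monomial (k • d) (c ^ k) := by
  induction k with
  | zero => simp
  | succ m ih =>
      rw [pow_succ, ih, MvPowerSeries.monomial_mul_monomial, pow_succ, succ_nsmul]

lemma monomial_mem_coeffIdeal {n : ℕ} {R : Type*} [CommRing R] {J : Ideal R}
    (d : Fin n →₀ ℕ) {c : R} (hc : c ∈ J) :
    MvPowerSeries.monomial d c ∈ coeffIdeal J := by
  intro e
  rw [MvPowerSeries.coeff_monomial]
  split <;> simp [hc]


/-- If `u ∈ (R,I)⟨X_1,…,X_n⟩` has all coefficients in `√I`, then for every `N ≥ 1` there is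
`a ≥ 1` such that all coefficients of `u^a` lie in `I^N`. -/

theorem stmt_7 (R : Type*) [CommRing R] (I : Ideal R) (n : ℕ)
    (u : MvPowerSeries (Fin n) R) (huT : TateMem I u)
    (hurad : ∀ d : Fin n →₀ ℕ, MvPowerSeries.coeff d u ∈ I.radical) :
    ∀ N : ℕ, 1 ≤ N → ∃ a : ℕ, 1 ≤ a ∧
      ∀ d : Fin n →₀ ℕ, MvPowerSeries.coeff d (u ^ a) ∈ I ^ N := by
  intro N hN
  classical
  -- the finite "bad" set of coefficients not in I
  have hfin : {d : Fin n →₀ ℕ | MvPowerSeries.coeff d u ∉ I ^ 1}.Finite := huT 1 le_rfl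
  set S : Finset (Fin n →₀ ℕ) := hfin.toFinset with hS
  set v : MvPowerSeries (Fin n) R :=
    ∑ d ∈ S, MvPowerSeries.monomial d (MvPowerSeries.coeff d u) with hv
  have hvcoeff : ∀ d, MvPowerSeries.coeff d v =
      if d ∈ S then MvPowerSeries.coeff d u else 0 := by
    intro d
    rw [hv, map_sum]
    rw [Finset.sum_congr rfl (fun e _ => MvPowerSeries.coeff_monomial d e _)]
    simp [Finset.sum_ite_eq' S d]
  have hw : u - v ∈ coeffIdeal I := by
    intro d
    rw [map_sub, hvcoeff d]
    by_cases hd : d ∈ S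
    · simp [hd]
    · simp only [hd, if_neg, sub_zero]
      have := hd
      rw [hS, Set.Finite.mem_toFinset] at this
      simpa [pow_one] using not_not.mp (by simpa using this)
  -- u lies in the radical of coeffIdeal (I ^ N)
  have hrad : u ∈ (coeffIdeal (I ^ N) : Ideal (MvPowerSeries (Fin n) R)).radical := by
    have hu : u = v + (u - v) := by ring
    rw [hu]
    refine Ideal.add_mem _ ?_ ?_
    · refine Ideal.sum_mem _ fun d _ => ?_
      obtain ⟨k, hk⟩ := hurad d
      refine ⟨k * N, ?_⟩
      rw [monomial_pow']
      exact monomial_mem_coeffIdeal _ (by rw [pow_mul]; exact Ideal.pow_mem_pow hk N)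
    · exact ⟨N, coeffIdeal_pow_mem hw N⟩
  obtain ⟨a, ha⟩ := hrad
  refine ⟨a + 1, Nat.le_add_left 1 a, fun d => ?_⟩
  have : u ^ (a + 1) ∈ coeffIdeal (I ^ N) := by
    rw [pow_succ]
    exact Ideal.mul_mem_right u _ ha
  exact this d
end

section
/- Let R be a commutative ring and I an ideal of R. Let F ∈ (R,I)⟨X_1,…,X_n⟩^n with F(0) = 0, and suppose the coefficientwise reduction F̄ ∈ (R/I)[X_1,…,X_n]^n of F modulo I is invertible in (R/I)[X_1,…,X_n]^n. Then for every e ≥ 1 and every index i (1 ≤ i ≤ n), there exists H ∈ (R,I)⟨X_1,…,X_n⟩ with H(0) = 0 such that every coefficient of X_i − H(F_1,…,F_n) lies in I^e, where H(F_1,…,F_n) denotes the substitution of the components of F for the variables of H. -/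
open MvPowerSeries

namespace Stmt10Aux

variable {n : ℕ} {R : Type*} [CommRing R]

/-- The ideal of power series all of whose coefficients lie in `J`. -/
def coeffIdeal (n : ℕ) (J : Ideal R) : Ideal (MvPowerSeries (Fin n) R) where
  carrier := {f | ∀ d, MvPowerSeries.coeff d f ∈ J}
  add_mem' := fun hf hg d => by simpa using J.add_mem (hf d) (hg d)
  zero_mem' := fun d => by simp
  smul_mem' := fun c f hf => fun d => by
    rw [smul_eq_mul, MvPowerSeries.coeff_mul]
    exact Ideal.sum_mem _ fun p _ => J.mul_mem_left _ (hf p.2)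

lemma mem_coeffIdeal {J : Ideal R} {f : MvPowerSeries (Fin n) R} :
    f ∈ coeffIdeal n J ↔ ∀ d, MvPowerSeries.coeff d f ∈ J := Iff.rfl

/-- The Tate algebra as a subalgebra. -/
def tateAlg (n : ℕ) (I : Ideal R) : Subalgebra R (MvPowerSeries (Fin n) R) where
  carrier := {f | TateMem I f}
  mul_mem' := by
    intro f g hf hg k hk
    apply Set.Finite.subset (Set.Finite.image2 (· + ·) (hf k hk) (hg k hk))
    intro d hd
    by_contra hmem
    apply hd
    show _ ∈ I ^ k
    rw [MvPowerSeries.coeff_mul]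
    refine Ideal.sum_mem _ fun p hp => ?_
    rcases Finset.HasAntidiagonal.mem_antidiagonal.mp hp with rfl
    by_cases h1 : MvPowerSeries.coeff p.1 f ∈ I ^ k
    · exact Ideal.mul_mem_right _ _ h1
    by_cases h2 : MvPowerSeries.coeff p.2 g ∈ I ^ k
    · exact Ideal.mul_mem_left _ _ h2
    · exact absurd (Set.mem_image2_of_mem
        (show p.1 ∈ {d | MvPowerSeries.coeff d f ∉ I ^ k} from h1)
        (show p.2 ∈ {d | MvPowerSeries.coeff d g ∉ I ^ k} from h2)) hmem
  add_mem' := by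
    intro f g hf hg k hk
    apply Set.Finite.subset ((hf k hk).union (hg k hk))
    intro d hd
    by_contra hmem
    simp only [Set.mem_union, Set.mem_setOf_eq, not_or, not_not] at hmem
    apply hd
    show _ ∈ I ^ k
    simpa using Ideal.add_mem _ hmem.1 hmem.2
  algebraMap_mem' := by
    intro r k hk
    apply Set.Finite.subset (Set.finite_singleton 0)
    intro d hd
    by_contra h0
    apply hd
    have hd0 : d ≠ 0 := by simpa using h0
    show _ ∈ I ^ k
    have : (MvPowerSeries.coeff d) ((algebraMap R (MvPowerSeries (Fin n) R)) r) = 0 := by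
      rw [MvPowerSeries.algebraMap_apply]
      simp [MvPowerSeries.coeff_C, hd0]
    rw [this]
    exact Ideal.zero_mem _
  

lemma tate_coe (I : Ideal R) (Q : MvPolynomial (Fin n) R) :
    TateMem I (Q : MvPowerSeries (Fin n) R) := by
  intro k hk
  apply Set.Finite.subset Q.support.finite_toSet
  intro d hd
  by_contra hsupp
  apply hd
  show _ ∈ I ^ k
  rw [MvPolynomial.coeff_coe]
  rw [MvPolynomial.notMem_support_iff.mp (by simpa using hsupp)]
  exact Ideal.zero_mem _

lemma tate_aeval (I : Ideal R) (F : Fin n → MvPowerSeries (Fin n) R)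
    (hFT : ∀ i, TateMem I (F i)) (Q : MvPolynomial (Fin n) R) :
    TateMem I (MvPolynomial.aeval F Q) := by
  have : MvPolynomial.aeval F Q =
      (tateAlg n I).val (MvPolynomial.aeval (fun i => (⟨F i, hFT i⟩ : tateAlg n I)) Q) := by
    exact (MvPolynomial.comp_aeval_apply (f := fun i => (⟨F i, hFT i⟩ : tateAlg n I))
      (tateAlg n I).val Q).symm
  rw [this]
  exact (MvPolynomial.aeval (fun i => (⟨F i, hFT i⟩ : tateAlg n I)) Q).2

lemma psSubst_coe (F : Fin n → MvPowerSeries (Fin n) R) (Q : MvPolynomial (Fin n) R) :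
    psSubst F (Q : MvPowerSeries (Fin n) R) = MvPolynomial.aeval F Q := by
  ext e
  show (∑ᶠ d : Fin n →₀ ℕ,
    MvPowerSeries.coeff d (Q : MvPowerSeries (Fin n) R)
      * MvPowerSeries.coeff e (∏ j, F j ^ d j)) = _
  rw [finsum_eq_sum_of_support_subset _ (s := Q.support) (by
    intro d hd
    simp only [Function.mem_support] at hd
    by_contra hs
    apply hd
    rw [MvPolynomial.coeff_coe, MvPolynomial.notMem_support_iff.mp hs, zero_mul])]
  rw [MvPolynomial.aeval_def, MvPolynomial.eval₂_eq', map_sum]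
  refine Finset.sum_congr rfl fun d _ => ?_
  rw [MvPolynomial.coeff_coe, MvPowerSeries.algebraMap_apply]
  simp only [Algebra.algebraMap_self, RingHom.id_apply]
  rw [MvPowerSeries.coeff_C_mul]

lemma coe_eq_aeval_X (P : MvPolynomial (Fin n) R) :
    (P : MvPowerSeries (Fin n) R)
      = MvPolynomial.aeval (fun j => (MvPowerSeries.X j : MvPowerSeries (Fin n) R)) P := by
  have h : (MvPolynomial.coeToMvPowerSeries.algHom (σ := Fin n) R : MvPolynomial (Fin n) R →ₐ[R] MvPowerSeries (Fin n) R)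
      = MvPolynomial.aeval (fun j => (MvPowerSeries.X j : MvPowerSeries (Fin n) R)) := by
    apply MvPolynomial.algHom_ext
    intro i
    simp [MvPolynomial.coeToMvPowerSeries.algHom_apply, MvPowerSeries.map_id]
  have := DFunLike.congr_fun h P
  rw [MvPolynomial.coeToMvPowerSeries.algHom_apply] at this
  rw [← this]
  simp [MvPowerSeries.map_id]

lemma prod_pow_sub_mem {J : Ideal (MvPowerSeries (Fin n) R)}
    {K L : Fin n → MvPowerSeries (Fin n) R} (h : ∀ j, K j - L j ∈ J) (d : Fin n →₀ ℕ) :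
    (∏ j, K j ^ d j) - (∏ j, L j ^ d j) ∈ J := by
  rw [← Ideal.Quotient.eq]
  rw [map_prod, map_prod]
  refine Finset.prod_congr rfl fun j _ => ?_
  rw [map_pow, map_pow, Ideal.Quotient.eq.mpr (h j)]


lemma correction {I : Ideal R} {e : ℕ} (K : Fin n → MvPowerSeries (Fin n) R)
    (hK : ∀ j, K j - MvPowerSeries.X j ∈ coeffIdeal n I)
    (P : MvPolynomial (Fin n) R) (hP : ∀ b, P.coeff b ∈ I ^ e) :
    MvPolynomial.aeval K P - (P : MvPowerSeries (Fin n) R) ∈ coeffIdeal n (I ^ (e + 1)) := by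
  rw [coe_eq_aeval_X, MvPolynomial.aeval_def, MvPolynomial.aeval_def,
    MvPolynomial.eval₂_eq', MvPolynomial.eval₂_eq', ← Finset.sum_sub_distrib]
  refine Ideal.sum_mem _ fun d _ => ?_
  rw [← mul_sub]
  rw [mem_coeffIdeal]
  intro b
  rw [MvPowerSeries.algebraMap_apply]
  simp only [Algebra.algebraMap_self, RingHom.id_apply]
  rw [MvPowerSeries.coeff_C_mul, pow_succ]
  exact Ideal.mul_mem_mul (hP d) (mem_coeffIdeal.mp (prod_pow_sub_mem hK d) b)

lemma map_aeval_ps {S : Type*} [CommRing S] (f : R →+* S)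
    (F : Fin n → MvPowerSeries (Fin n) R) (Q : MvPolynomial (Fin n) R) :
    MvPowerSeries.map f (MvPolynomial.aeval F Q)
      = MvPolynomial.aeval (fun i => MvPowerSeries.map f (F i))
          (MvPolynomial.map f Q) := by
  rw [MvPolynomial.aeval_def, MvPolynomial.aeval_def, MvPolynomial.eval₂_map]
  rw [MvPolynomial.eval₂_comp_left (MvPowerSeries.map f)]
  congr 1
  refine RingHom.ext fun r => ?_
  show MvPowerSeries.map f (algebraMap R _ r) = algebraMap S _ (f r)
  rw [MvPowerSeries.algebraMap_apply, MvPowerSeries.algebraMap_apply]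
  simp only [Algebra.algebraMap_self, RingHom.id_apply]
  rw [MvPowerSeries.map_C]

lemma constantCoeff_aeval (F : Fin n → MvPowerSeries (Fin n) R)
    (hF0 : ∀ j, MvPowerSeries.constantCoeff (F j) = 0)
    (Q : MvPolynomial (Fin n) R) :
    MvPowerSeries.constantCoeff (MvPolynomial.aeval F Q)
      = MvPolynomial.constantCoeff Q := by
  rw [MvPolynomial.aeval_def, MvPolynomial.eval₂_eq', map_sum]
  have hterm : ∀ d ∈ Q.support,
      MvPowerSeries.constantCoeff
        (algebraMap R _ (Q.coeff d) * ∏ j, F j ^ d j)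
      = if d = 0 then Q.coeff d else 0 := by
    intro d _
    rw [map_mul, map_prod]
    have hc : MvPowerSeries.constantCoeff (algebraMap R (MvPowerSeries (Fin n) R) (Q.coeff d))
        = Q.coeff d := by
      rw [MvPowerSeries.algebraMap_apply]
      simp [MvPowerSeries.constantCoeff_C]
    by_cases hd : d = 0
    · subst hd
      simp [hc]
    · rw [if_neg hd, hc]
      obtain ⟨j, hj⟩ : ∃ j, d j ≠ 0 := by
        by_contra hall
        push_neg at hall
        exact hd (Finsupp.ext hall)
      rw [Finset.prod_eq_zero (Finset.mem_univ j)]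
      · ring
      · rw [map_pow, hF0 j, zero_pow hj]
  rw [Finset.sum_congr rfl hterm, Finset.sum_ite_eq' Q.support 0 (fun d => Q.coeff d)]
  rw [MvPolynomial.constantCoeff_eq]
  by_cases h0 : (0 : Fin n →₀ ℕ) ∈ Q.support
  · rw [if_pos h0]
  · rw [if_neg h0, MvPolynomial.notMem_support_iff.mp h0]

end Stmt10Aux


/-- If `F ∈ (R,I)⟨X_1,…,X_n⟩ⁿ` has `F(0) = 0` and its coefficientwise reduction mod `I` is
invertible in `(R/I)[X_1,…,X_n]ⁿ`, then for every `e ≥ 1` and every index `i` there is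
`H ∈ (R,I)⟨X_1,…,X_n⟩` with `H(0) = 0` such that all coefficients of `X_i - H(F_1,…,F_n)`
lie in `I^e`. -/
theorem stmt_10 (R : Type*) [CommRing R] (I : Ideal R) (n : ℕ)
    (F : Fin n → MvPowerSeries (Fin n) R)
    (hFT : ∀ i, TateMem I (F i))
    (hF0 : ∀ i, MvPowerSeries.constantCoeff (F i) = 0)
    (Fbar : Fin n → MvPolynomial (Fin n) (R ⧸ I))
    (hFbar : ∀ i, (Fbar i : MvPowerSeries (Fin n) (R ⧸ I)) =
      MvPowerSeries.map (Ideal.Quotient.mk I) (F i))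
    (hinv : ∃ Gbar : Fin n → MvPolynomial (Fin n) (R ⧸ I),
      (∀ i, MvPolynomial.bind₁ Gbar (Fbar i) = MvPolynomial.X i) ∧
      (∀ i, MvPolynomial.bind₁ Fbar (Gbar i) = MvPolynomial.X i)) :
    ∀ e : ℕ, 1 ≤ e → ∀ i : Fin n,
      ∃ H : MvPowerSeries (Fin n) R, TateMem I H ∧
        MvPowerSeries.constantCoeff H = 0 ∧
        ∀ d : Fin n →₀ ℕ,
          MvPowerSeries.coeff d (MvPowerSeries.X i - psSubst F H) ∈ I ^ e := by
  classical
  obtain ⟨Gbar, _h1, h2⟩ := hinv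
  choose Gt hGt using fun j =>
    MvPolynomial.map_surjective (Ideal.Quotient.mk I) Ideal.Quotient.mk_surjective (Gbar j)
  set K : Fin n → MvPowerSeries (Fin n) R := fun j => MvPolynomial.aeval F (Gt j) with hKdef
  -- the lifted "inverse" composed with F is X mod I
  have hmapK : ∀ j, MvPowerSeries.map (Ideal.Quotient.mk I) (K j)
      = MvPowerSeries.X j := by
    intro j
    rw [hKdef]
    rw [Stmt10Aux.map_aeval_ps, hGt j]
    have hFmap : (fun i => MvPowerSeries.map (Ideal.Quotient.mk I) (F i))
        = fun i => ((Fbar i : MvPowerSeries (Fin n) (R ⧸ I))) := by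
      funext i; rw [← hFbar i]
    rw [hFmap]
    have hφ : ∀ q : MvPolynomial (Fin n) (R ⧸ I),
        (MvPolynomial.coeToMvPowerSeries.algHom (R ⧸ I) q : MvPowerSeries (Fin n) (R ⧸ I))
          = ↑q := by
      intro q
      rw [MvPolynomial.coeToMvPowerSeries.algHom_apply]
      simp [MvPowerSeries.map_id]
    have key : (MvPolynomial.aeval fun i => ((Fbar i : MvPowerSeries (Fin n) (R ⧸ I)))) (Gbar j)
        = ((MvPolynomial.aeval Fbar (Gbar j) : MvPolynomial (Fin n) (R ⧸ I))
            : MvPowerSeries (Fin n) (R ⧸ I)) := by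
      rw [← hφ (MvPolynomial.aeval Fbar (Gbar j)), MvPolynomial.comp_aeval_apply]
      simp only [hφ]
    rw [key]
    have : MvPolynomial.aeval Fbar (Gbar j) = MvPolynomial.X j := h2 j
    rw [this, MvPolynomial.coe_X]
  have hKX : ∀ j, K j - MvPowerSeries.X j ∈ Stmt10Aux.coeffIdeal n I := by
    intro j
    rw [Stmt10Aux.mem_coeffIdeal]
    intro d
    rw [← Ideal.Quotient.eq_zero_iff_mem]
    rw [show Ideal.Quotient.mk I (MvPowerSeries.coeff d (K j - MvPowerSeries.X j))
        = MvPowerSeries.coeff d (MvPowerSeries.map (Ideal.Quotient.mk I)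
            (K j - MvPowerSeries.X j)) from (MvPowerSeries.coeff_map _ _ _).symm]
    rw [map_sub, hmapK j, MvPowerSeries.map_X, sub_self, map_zero]
  intro e _he i
  -- main induction
  have main : ∀ m : ℕ, ∃ H : MvPolynomial (Fin n) R,
      MvPowerSeries.X i - MvPolynomial.aeval F H ∈ Stmt10Aux.coeffIdeal n (I ^ m) := by
    intro m
    induction m with
    | zero =>
      refine ⟨0, ?_⟩
      rw [Stmt10Aux.mem_coeffIdeal]
      intro d
      rw [pow_zero, Ideal.one_eq_top]
      exact Submodule.mem_top
    | succ m ih =>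
      obtain ⟨H, hH⟩ := ih
      set D := MvPowerSeries.X i - MvPolynomial.aeval F H with hD
      have hDT : TateMem I D := by
        have hX : TateMem I (MvPowerSeries.X (R := R) (σ := Fin n) i) := by
          have := Stmt10Aux.tate_coe I (MvPolynomial.X i (R := R))
          rwa [MvPolynomial.coe_X] at this
        exact (Stmt10Aux.tateAlg n I).sub_mem hX (Stmt10Aux.tate_aeval I F hFT H)
      set S := (hDT (m + 1) (by omega)).toFinset with hS
      set P := ∑ b ∈ S, MvPolynomial.monomial b (MvPowerSeries.coeff b D) with hP
      have hPcoeff : ∀ b, P.coeff b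
          = if b ∈ S then MvPowerSeries.coeff b D else 0 := by
        intro b
        rw [hP, MvPolynomial.coeff_sum]
        simp [MvPolynomial.coeff_monomial]
      have hPe : ∀ b, P.coeff b ∈ I ^ m := by
        intro b
        rw [hPcoeff]
        split
        · exact Stmt10Aux.mem_coeffIdeal.mp hH b
        · exact Ideal.zero_mem _
      have hDP : D - ↑P ∈ Stmt10Aux.coeffIdeal n (I ^ (m + 1)) := by
        rw [Stmt10Aux.mem_coeffIdeal]
        intro b
        rw [map_sub, MvPolynomial.coeff_coe, hPcoeff]
        by_cases hb : b ∈ S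
        · rw [if_pos hb, sub_self]; exact Ideal.zero_mem _
        · rw [if_neg hb, sub_zero]
          by_contra hc
          exact hb (by rw [hS]; exact (Set.Finite.mem_toFinset _).mpr hc)
      refine ⟨H + MvPolynomial.bind₁ Gt P, ?_⟩
      have hsplit : MvPowerSeries.X i - MvPolynomial.aeval F (H + MvPolynomial.bind₁ Gt P)
          = (D - (P : MvPowerSeries (Fin n) R))
            + ((P : MvPowerSeries (Fin n) R) - MvPolynomial.aeval K P) := by
        rw [map_add, MvPolynomial.aeval_bind₁, hD, hKdef]
        ring
      rw [hsplit]
      refine Ideal.add_mem _ hDP ?_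
      have hc := Stmt10Aux.correction K hKX P hPe
      simpa using (Stmt10Aux.coeffIdeal n (I ^ (m + 1))).neg_mem hc
  obtain ⟨H, hH⟩ := main e
  set c0 := MvPolynomial.constantCoeff H with hc0def
  have hc0 : c0 ∈ I ^ e := by
    have := Stmt10Aux.mem_coeffIdeal.mp hH 0
    rw [map_sub] at this
    rw [MvPowerSeries.coeff_zero_eq_constantCoeff_apply,
      MvPowerSeries.coeff_zero_eq_constantCoeff_apply,
      MvPowerSeries.constantCoeff_X, Stmt10Aux.constantCoeff_aeval F hF0 H,
      zero_sub] at this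
    simpa [hc0def] using (I ^ e).neg_mem this
  refine ⟨((H - MvPolynomial.C c0 : MvPolynomial (Fin n) R) : MvPowerSeries (Fin n) R),
    Stmt10Aux.tate_coe I _, ?_, ?_⟩
  · rw [← MvPowerSeries.coeff_zero_eq_constantCoeff_apply, MvPolynomial.coeff_coe]
    rw [MvPolynomial.coeff_sub, MvPolynomial.coeff_zero_C]
    rw [hc0def, MvPolynomial.constantCoeff_eq]
    exact sub_self _
  · intro d
    rw [Stmt10Aux.psSubst_coe, map_sub, map_sub]
    have hCc : MvPolynomial.aeval F (MvPolynomial.C c0)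
        = algebraMap R (MvPowerSeries (Fin n) R) c0 := by
      rw [MvPolynomial.aeval_C]
    rw [hCc]
    have hsplit2 : MvPowerSeries.X i
          - (MvPolynomial.aeval F H - algebraMap R (MvPowerSeries (Fin n) R) c0)
        = (MvPowerSeries.X i - MvPolynomial.aeval F H)
          + algebraMap R (MvPowerSeries (Fin n) R) c0 := by ring
    rw [← map_sub, hsplit2, map_add]
    refine Ideal.add_mem _ ?_ ?_
    · exact Stmt10Aux.mem_coeffIdeal.mp hH d
    · rw [MvPowerSeries.algebraMap_apply]
      simp only [Algebra.algebraMap_self, RingHom.id_apply]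
      rw [MvPowerSeries.coeff_C]
      split
      · exact hc0
      · exact Ideal.zero_mem _
end

section
/- Let R be a commutative ring and I an ideal of R. Let F ∈ R[X_1,…,X_n]^n be of the form F_i = X_i + (terms of total degree ≥ 2), and suppose the Jacobian determinant of the reduction of F modulo I is a unit of (R/I)[X_1,…,X_n]. Then det(∂F_i/∂X_j) is a unit of the Tate algebra (R,I)⟨X_1,…,X_n⟩. -/
open MvPowerSeries

lemma tateMem_coe {n : ℕ} {R : Type*} [CommRing R] (I : Ideal R) (p : MvPolynomial (Fin n) R) :
    TateMem I (p : MvPowerSeries (Fin n) R) := by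
  intro k _
  apply Set.Finite.subset p.support.finite_toSet
  intro d hd
  simp only [Set.mem_setOf_eq, MvPolynomial.coeff_coe] at hd
  by_contra h
  simp only [Finset.mem_coe, MvPolynomial.mem_support_iff, not_not] at h
  exact hd (h ▸ Submodule.zero_mem _)

lemma coeff_mul_mem {n : ℕ} {R : Type*} [CommRing R] {J : Ideal R}
    {f : MvPowerSeries (Fin n) R} (hf : ∀ d, MvPowerSeries.coeff d f ∈ J)
    (g : MvPowerSeries (Fin n) R) (d : Fin n →₀ ℕ) :
    MvPowerSeries.coeff d (f * g) ∈ J := by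
  rw [MvPowerSeries.coeff_mul]
  exact Ideal.sum_mem _ fun x _ => J.mul_mem_right _ (hf x.1)

lemma coeff_pow_mem {n : ℕ} {R : Type*} [CommRing R] {I : Ideal R}
    {f : MvPowerSeries (Fin n) R} (hf : ∀ d, MvPowerSeries.coeff d f ∈ I) :
    ∀ (k : ℕ) (d : Fin n →₀ ℕ), MvPowerSeries.coeff d (f ^ k) ∈ I ^ k := by
  intro k
  induction k with
  | zero => intro d; simp [Ideal.one_eq_top]
  | succ k ih =>
    intro d
    rw [pow_succ, pow_succ, MvPowerSeries.coeff_mul]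
    exact Ideal.sum_mem _ fun x _ => Ideal.mul_mem_mul (ih x.1) (hf x.2)

lemma coeff_zero_pderiv {n : ℕ} {R : Type*} [CommRing R] (j : Fin n) (p : MvPolynomial (Fin n) R) :
    MvPolynomial.coeff 0 (MvPolynomial.pderiv j p) = MvPolynomial.coeff (Finsupp.single j 1) p := by
  induction p using MvPolynomial.induction_on' with
  | add p q hp hq => simp [hp, hq]
  | monomial s a =>
    rw [MvPolynomial.pderiv_monomial, MvPolynomial.coeff_monomial, MvPolynomial.coeff_monomial]
    split_ifs with h0 h1 h1
    · subst h1; simp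
    · have hle : s ≤ Finsupp.single j 1 := tsub_eq_zero_iff_le.mp h0
      have hj : s j = 0 := by
        have hb : s j ≤ 1 := by simpa using Finsupp.le_def.mp hle j
        rcases Nat.le_one_iff_eq_zero_or_eq_one.mp hb with h | h
        · exact h
        · exfalso; apply h1; ext i
          by_cases hi : i = j
          · subst hi; simpa using h
          · have hthis := Finsupp.le_def.mp hle i
            have hij : j ≠ i := fun hh => hi hh.symm
            simp only [Finsupp.single_apply, if_neg hij] at hthis ⊢
            omega
      simp [hj]
    · exfalso; apply h0; subst h1; simp
    · rfl

/-- If `F ∈ R[X_1,…,X_n]ⁿ` has the form `F_i = X_i + (terms of total degree ≥ 2)` and the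
Jacobian determinant of the reduction of `F` mod `I` is a unit of `(R/I)[X_1,…,X_n]`, then
`det JF` is a unit of the Tate algebra `(R,I)⟨X_1,…,X_n⟩`. -/
theorem stmt_12 (R : Type*) [CommRing R] (I : Ideal R) (n : ℕ)
    (F : Fin n → MvPolynomial (Fin n) R)
    (hform : ∀ i, ∀ d : Fin n →₀ ℕ, (d.sum fun _ v => v) < 2 →
      MvPolynomial.coeff d (F i - MvPolynomial.X i) = 0)
    (hdet : IsUnit (Matrix.det (Matrix.of fun i j =>
      MvPolynomial.pderiv j (MvPolynomial.map (Ideal.Quotient.mk I) (F i))))) :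
    TateUnit I ((Matrix.det (Matrix.of fun i j => MvPolynomial.pderiv j (F i)) :
      MvPolynomial (Fin n) R) : MvPowerSeries (Fin n) R) := by
  classical
  set D : MvPolynomial (Fin n) R :=
    Matrix.det (Matrix.of fun i j => MvPolynomial.pderiv j (F i)) with hDdef
  -- constant coefficient of D is 1
  have hc : MvPolynomial.constantCoeff D = 1 := by
    rw [hDdef, RingHom.map_det, RingHom.mapMatrix_apply]
    have hmat : (Matrix.of fun i j => MvPolynomial.pderiv j (F i)).map
        MvPolynomial.constantCoeff = 1 := by
      ext i j
      rw [Matrix.map_apply, Matrix.of_apply, MvPolynomial.constantCoeff_eq,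
        coeff_zero_pderiv]
      have h1 : MvPolynomial.coeff (Finsupp.single j 1) (F i) =
          MvPolynomial.coeff (Finsupp.single j 1) (F i - MvPolynomial.X i) +
          MvPolynomial.coeff (Finsupp.single j 1) (MvPolynomial.X i) := by
        rw [← MvPolynomial.coeff_add, sub_add_cancel]
      rw [h1, hform i _ (by simp [Finsupp.sum_single_index]), zero_add,
        MvPolynomial.coeff_X']
      by_cases hij : i = j
      · subst hij; simp [Matrix.one_apply]
      · rw [if_neg (fun h => hij (Finsupp.single_left_injective one_ne_zero h)),
          Matrix.one_apply_ne hij]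
    rw [hmat, Matrix.det_one]
  have hcps : MvPowerSeries.constantCoeff (D : MvPowerSeries (Fin n) R)
      = ((1 : Rˣ) : R) := by
    rw [← MvPowerSeries.coeff_zero_eq_constantCoeff_apply, MvPolynomial.coeff_coe,
      ← MvPolynomial.constantCoeff_eq, hc, Units.val_one]
  set g : MvPowerSeries (Fin n) R := MvPowerSeries.invOfUnit (D : MvPowerSeries (Fin n) R) 1
    with hgdef
  have hDg : (D : MvPowerSeries (Fin n) R) * g = 1 :=
    MvPowerSeries.mul_invOfUnit _ 1 hcps
  -- lift the inverse mod I
  have hdet' : IsUnit (MvPolynomial.map (Ideal.Quotient.mk I) D) := by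
    rw [hDdef, RingHom.map_det, RingHom.mapMatrix_apply]
    convert hdet using 2
    ext i j
    rw [Matrix.map_apply, Matrix.of_apply, Matrix.of_apply, MvPolynomial.pderiv_map]
  obtain ⟨u, hu⟩ := hdet'
  obtain ⟨Q, hQ⟩ := MvPolynomial.map_surjective _ Ideal.Quotient.mk_surjective
    ((u⁻¹ : (MvPolynomial (Fin n) (R ⧸ I))ˣ) : MvPolynomial (Fin n) (R ⧸ I))
  set E : MvPolynomial (Fin n) R := D * Q - 1 with hEdef
  have hE : ∀ d, MvPolynomial.coeff d E ∈ I := by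
    intro d
    rw [← Ideal.Quotient.eq_zero_iff_mem, ← MvPolynomial.coeff_map]
    rw [hEdef, map_sub, map_mul, map_one, ← hu, hQ, Units.mul_inv, sub_self,
      MvPolynomial.coeff_zero]
  set e : MvPowerSeries (Fin n) R := (E : MvPowerSeries (Fin n) R) with hedef
  set q : MvPowerSeries (Fin n) R := (Q : MvPowerSeries (Fin n) R) with hqdef
  have hecoeff : ∀ d, MvPowerSeries.coeff d (-e) ∈ I := by
    intro d
    rw [map_neg]
    exact neg_mem (hE d)
  have hcoe : e = (D : MvPowerSeries (Fin n) R) * q - 1 := by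
    rw [hedef, hEdef]
    rw [show ((D * Q - 1 : MvPolynomial (Fin n) R) : MvPowerSeries (Fin n) R) =
      MvPolynomial.coeToMvPowerSeries.ringHom (D * Q - 1) from rfl, map_sub, map_mul, map_one]
    rfl
  have heq : g = q - e * g := by
    have h2 : (1 + e) * g = q := by
      rw [hcoe]
      calc (1 + ((D : MvPowerSeries (Fin n) R) * q - 1)) * g
          = q * ((D : MvPowerSeries (Fin n) R) * g) := by ring
        _ = q := by rw [hDg, mul_one]
    linear_combination h2
  have hkey : ∀ k : ℕ, g = (∑ m ∈ Finset.range k, (-e) ^ m) * q + (-e) ^ k * g := by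
    intro k
    induction k with
    | zero => simp
    | succ k ih =>
      rw [Finset.sum_range_succ]
      calc g = (∑ m ∈ Finset.range k, (-e) ^ m) * q + (-e) ^ k * g := ih
        _ = (∑ m ∈ Finset.range k, (-e) ^ m) * q + (-e) ^ k * (q - e * g) := by rw [← heq]
        _ = ((∑ m ∈ Finset.range k, (-e) ^ m) + (-e) ^ k) * q + (-e) ^ (k + 1) * g := by ring
  have hgTate : TateMem I g := by
    intro k hk
    set P : MvPolynomial (Fin n) R := (∑ m ∈ Finset.range k, (-E) ^ m) * Q with hPdef
    have hP : (P : MvPowerSeries (Fin n) R) = (∑ m ∈ Finset.range k, (-e) ^ m) * q := by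
      rw [hPdef, show ((((∑ m ∈ Finset.range k, (-E) ^ m) * Q : MvPolynomial (Fin n) R)) :
        MvPowerSeries (Fin n) R) =
        MvPolynomial.coeToMvPowerSeries.ringHom ((∑ m ∈ Finset.range k, (-E) ^ m) * Q) from rfl,
        map_mul, map_sum]
      congr 1
      exact Finset.sum_congr rfl fun m _ => by rw [map_pow, map_neg]; rfl
    apply Set.Finite.subset P.support.finite_toSet
    intro d hd
    simp only [Set.mem_setOf_eq] at hd
    by_contra hsupp
    apply hd
    have : MvPowerSeries.coeff d g =
        MvPowerSeries.coeff d (P : MvPowerSeries (Fin n) R) +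
        MvPowerSeries.coeff d ((-e) ^ k * g) := by
      rw [← map_add]
      congr 1
      rw [hP]
      exact hkey k
    rw [this, MvPolynomial.coeff_coe]
    have h0 : MvPolynomial.coeff d P = 0 := by
      by_contra hne
      exact hsupp (Finset.mem_coe.mpr (MvPolynomial.mem_support_iff.mpr hne))
    rw [h0, zero_add]
    exact coeff_mul_mem (coeff_pow_mem hecoeff k) g d
  exact ⟨tateMem_coe I D, g, hgTate, hDg⟩
end

section
/- Let S be a commutative topological ring, R a subring of S carrying the subspace topology. For a topological ring T, let T⟨X_1,…,X_n⟩ denote the set of formal power series over T whose family of coefficients tends to 0 along the cofinite filter on the index set of monomials. Let F ∈ R⟨X_1,…,X_n⟩^n satisfy F(0) = 0 and suppose the determinant of the matrix of degree-one coefficients (JF)(0) = (coefficient of X_j in F_i)_{i,j} is a unit of R. If there exists G ∈ S⟨X_1,…,X_n⟩^n with F∘G = G∘F = (X_1,…,X_n) (F viewed over S), then every coefficient of every component of G lies in R; that is, G ∈ R⟨X_1,…,X_n⟩^n. -/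
open MvPowerSeries

/-- Membership in the Tate algebra over a topological ring: the coefficients tend to `0`
along the cofinite filter, i.e. for every neighborhood `U` of `0` all but finitely many
coefficients lie in `U`. -/
def TateMemTop {n : ℕ} {T : Type*} [CommRing T] [TopologicalSpace T]
    (f : MvPowerSeries (Fin n) T) : Prop :=
  ∀ U ∈ nhds (0 : T), {d : Fin n →₀ ℕ | MvPowerSeries.coeff d f ∉ U}.Finite

open Finset

section AuxWt

/-- weight of a monomial -/
def wt {n : ℕ} (d : Fin n →₀ ℕ) : ℕ := ∑ j, d j

lemma wt_eq_zero {n : ℕ} {d : Fin n →₀ ℕ} (h : wt d = 0) : d = 0 := by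
  have := (Finset.sum_eq_zero_iff).mp h
  ext j; exact this j (mem_univ j)

lemma wt_single_one {n : ℕ} (j : Fin n) : wt (Finsupp.single j 1) = 1 := by
  simp [wt, Finsupp.single_apply]

lemma apply_le_wt {n : ℕ} (d : Fin n →₀ ℕ) (j : Fin n) : d j ≤ wt d :=
  Finset.single_le_sum (fun _ _ => Nat.zero_le _) (mem_univ j)

lemma wt_finset_sum {n : ℕ} {ι : Type*} (s : Finset ι) (l : ι → (Fin n →₀ ℕ)) :
    wt (∑ i ∈ s, l i) = ∑ i ∈ s, wt (l i) := by
  simp only [wt, Finsupp.finset_sum_apply]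
  exact Finset.sum_comm

lemma wt_eq_one {n : ℕ} {d : Fin n →₀ ℕ} (h : wt d = 1) :
    ∃ j, d = Finsupp.single j 1 := by
  have h1 : ∃ j, d j ≠ 0 := by
    by_contra hc
    push_neg at hc
    simp only [wt] at h
    rw [Finset.sum_eq_zero (fun j _ => hc j)] at h
    exact one_ne_zero h.symm
  obtain ⟨j, hj⟩ := h1
  have hle := apply_le_wt d j
  rw [h] at hle
  have hdj : d j = 1 := le_antisymm hle (Nat.one_le_iff_ne_zero.mpr hj)
  refine ⟨j, ?_⟩
  have hrest : ∑ k ∈ univ.erase j, d k = 0 := by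
    have := Finset.add_sum_erase univ (⇑d) (mem_univ j)
    have h' : wt d = d j + ∑ k ∈ univ.erase j, d k := this.symm
    omega
  ext k
  rcases eq_or_ne k j with rfl | hk
  · simp [hdj]
  · have := (Finset.sum_eq_zero_iff).mp hrest k (by simp [hk])
    simp [Finsupp.single_apply, (Ne.symm hk), this]

end AuxWt

section AuxProd

variable {n : ℕ} {S : Type*} [CommRing S]

lemma coeff_prod_eq_zero {ι : Type*} [DecidableEq ι] (s : Finset ι)
    (f : ι → MvPowerSeries (Fin n) S)
    (hf : ∀ i ∈ s, constantCoeff (f i) = 0)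
    (e : Fin n →₀ ℕ) (h : wt e < s.card) :
    MvPowerSeries.coeff e (∏ i ∈ s, f i) = 0 := by
  rw [MvPowerSeries.coeff_prod]
  apply Finset.sum_eq_zero
  intro l hl
  rw [mem_finsuppAntidiag] at hl
  have hwt : ∑ i ∈ s, wt (l i) = wt e := by rw [← wt_finset_sum, hl.1]
  have : ∃ i ∈ s, l i = 0 := by
    by_contra hc
    push_neg at hc
    have : s.card ≤ ∑ i ∈ s, wt (l i) := by
      calc s.card = ∑ _i ∈ s, 1 := by simp
        _ ≤ ∑ i ∈ s, wt (l i) := Finset.sum_le_sum (fun i hi =>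
          Nat.one_le_iff_ne_zero.mpr (fun h0 => hc i hi (wt_eq_zero h0)))
    omega
  obtain ⟨i, hi, hli⟩ := this
  apply Finset.prod_eq_zero hi
  rw [hli, MvPowerSeries.coeff_zero_eq_constantCoeff]
  exact hf i hi

lemma coeff_prod_congr {ι : Type*} [DecidableEq ι] (s : Finset ι)
    (f g : ι → MvPowerSeries (Fin n) S) (m : ℕ)
    (hf : ∀ i ∈ s, constantCoeff (f i) = 0)
    (hg : ∀ i ∈ s, constantCoeff (g i) = 0)
    (hagree : ∀ i ∈ s, ∀ u : Fin n →₀ ℕ, wt u < m →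
      MvPowerSeries.coeff u (f i) = MvPowerSeries.coeff u (g i))
    (hcard : 2 ≤ s.card) (e : Fin n →₀ ℕ) (he : wt e ≤ m) :
    MvPowerSeries.coeff e (∏ i ∈ s, f i) = MvPowerSeries.coeff e (∏ i ∈ s, g i) := by
  rw [MvPowerSeries.coeff_prod, MvPowerSeries.coeff_prod]
  apply Finset.sum_congr rfl
  intro l hl
  rw [mem_finsuppAntidiag] at hl
  have hwt : ∑ i ∈ s, wt (l i) = wt e := by rw [← wt_finset_sum, hl.1]
  by_cases hsmall : ∀ i ∈ s, wt (l i) < m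
  · exact Finset.prod_congr rfl (fun i hi => hagree i hi (l i) (hsmall i hi))
  · push_neg at hsmall
    obtain ⟨i₀, hi₀, hbig⟩ := hsmall
    obtain ⟨a, ha, b, hb, hab⟩ := Finset.one_lt_card.mp (by omega : 1 < s.card)
    obtain ⟨i₁, hi₁, hne⟩ : ∃ i₁ ∈ s, i₁ ≠ i₀ := by
      rcases eq_or_ne a i₀ with rfl | h
      · exact ⟨b, hb, fun h => hab h.symm⟩
      · exact ⟨a, ha, h⟩
    have hzero : l i₁ = 0 := by
      apply wt_eq_zero
      have h1 : wt (l i₀) + wt (l i₁) ≤ ∑ i ∈ s, wt (l i) := by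
        rw [← Finset.add_sum_erase s _ hi₀]
        have : i₁ ∈ s.erase i₀ := Finset.mem_erase.mpr ⟨hne, hi₁⟩
        have h2 : wt (l i₁) ≤ ∑ x ∈ s.erase i₀, wt (l x) :=
          Finset.single_le_sum (f := fun i => wt (l i)) (fun i _ => Nat.zero_le _) this
        omega
      omega
    rw [Finset.prod_eq_zero hi₁, Finset.prod_eq_zero hi₁]
    · rw [hzero, MvPowerSeries.coeff_zero_eq_constantCoeff]; exact hg i₁ hi₁
    · rw [hzero, MvPowerSeries.coeff_zero_eq_constantCoeff]; exact hf i₁ hi₁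

lemma prod_pow_flatten (d : Fin n →₀ ℕ) (G : Fin n → MvPowerSeries (Fin n) S) :
    ∏ j, G j ^ d j = ∏ p ∈ Finset.univ.sigma (fun j => Finset.range (d j)), G p.1 := by
  rw [Finset.prod_sigma]
  exact Finset.prod_congr rfl (fun j _ => by
    rw [show (∏ s ∈ Finset.range (d j), G (⟨j, s⟩ : Σ _ : Fin n, ℕ).1) =
      ∏ _s ∈ Finset.range (d j), G j from rfl, Finset.prod_const, Finset.card_range])

lemma card_flatten (d : Fin n →₀ ℕ) :
    (Finset.univ.sigma (fun j : Fin n => Finset.range (d j))).card = wt d := by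
  rw [Finset.card_sigma]
  simp [wt]

end AuxProd


/-- Let `R` be a subring of the topological ring `S`, with the subspace topology. If
`F ∈ R⟨X_1,…,X_n⟩ⁿ` has `F(0) = 0` and `det JF(0)` a unit of `R`, and `G ∈ S⟨X_1,…,X_n⟩ⁿ`
is an inverse of `F` (viewed over `S`), then all coefficients of `G` lie in `R`. -/
theorem stmt_13 (S : Type*) [CommRing S] [TopologicalSpace S] [IsTopologicalRing S]
    (R : Subring S) (n : ℕ)
    (F : Fin n → MvPowerSeries (Fin n) R)
    (hFT : ∀ i, TateMemTop (F i))
    (hF0 : ∀ i, MvPowerSeries.constantCoeff (F i) = 0)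
    (hdet : IsUnit (Matrix.det (Matrix.of fun i j =>
      MvPowerSeries.coeff (Finsupp.single j 1) (F i))))
    (G : Fin n → MvPowerSeries (Fin n) S)
    (hGT : ∀ i, TateMemTop (G i))
    (hG0 : ∀ i, MvPowerSeries.constantCoeff (G i) = 0)
    (hFG : ∀ i, psSubst G (MvPowerSeries.map R.subtype (F i)) = MvPowerSeries.X i)
    (hGF : ∀ i, psSubst (fun j => MvPowerSeries.map R.subtype (F j)) (G i) =
      MvPowerSeries.X i) :
    ∀ i, ∀ d : Fin n →₀ ℕ, MvPowerSeries.coeff d (G i) ∈ R := by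
  classical
  set F' : Fin n → MvPowerSeries (Fin n) S :=
    fun i => MvPowerSeries.map R.subtype (F i) with hF'def
  have hF'mem : ∀ i (d : Fin n →₀ ℕ), MvPowerSeries.coeff d (F' i) ∈ R := by
    intro i d
    rw [hF'def]
    simp only [MvPowerSeries.coeff_map]
    exact SetLike.coe_mem _
  have hF'0 : ∀ i, MvPowerSeries.constantCoeff (F' i) = 0 := by
    intro i
    rw [hF'def]
    simp only [MvPowerSeries.constantCoeff_map, hF0 i]
    exact map_zero _
  set A : Matrix (Fin n) (Fin n) R :=
    Matrix.of (fun i j => MvPowerSeries.coeff (Finsupp.single j 1) (F i))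
    with hAdef
  haveI : Invertible A := A.invertibleOfIsUnitDet hdet
  set B := ⅟A with hBdef
  have hBA : B * A = 1 := invOf_mul_self A
  have hA' : ∀ i j, MvPowerSeries.coeff (Finsupp.single j 1) (F' i) = ((A i j : R) : S) := by
    intro i j
    rw [hF'def, hAdef]
    simp [MvPowerSeries.coeff_map]
  have key : ∀ m : ℕ, ∀ e : Fin n →₀ ℕ, wt e = m → ∀ i, MvPowerSeries.coeff e (G i) ∈ R := by
    intro m
    induction m using Nat.strong_induction_on with
    | _ m IH =>
    intro e he i
    rcases Nat.eq_zero_or_pos m with rfl | hm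
    · rw [wt_eq_zero he, MvPowerSeries.coeff_zero_eq_constantCoeff, hG0 i]
      exact zero_mem R
    -- the truncation of G below weight m, as a series over R
    set H0 : Fin n → MvPowerSeries (Fin n) R := fun j u =>
      if h : wt u < m then ⟨MvPowerSeries.coeff u (G j), IH (wt u) h u rfl j⟩ else 0
      with hH0def
    set H : Fin n → MvPowerSeries (Fin n) S :=
      fun j => MvPowerSeries.map R.subtype (H0 j) with hHdef
    have hHG : ∀ j (u : Fin n →₀ ℕ), wt u < m →
        MvPowerSeries.coeff u (H j) = MvPowerSeries.coeff u (G j) := by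
      intro j u hu
      have h1 : MvPowerSeries.coeff u (H0 j)
          = ⟨MvPowerSeries.coeff u (G j), IH (wt u) hu u rfl j⟩ := by
        rw [MvPowerSeries.coeff_apply]
        simp only [hH0def]
        exact dif_pos hu
      rw [hHdef]
      simp only [MvPowerSeries.coeff_map, h1]
      rfl
    have hH0' : ∀ j, MvPowerSeries.constantCoeff (H j) = 0 := by
      intro j
      rw [← MvPowerSeries.coeff_zero_eq_constantCoeff, hHG j 0 (by simpa [wt] using hm),
        MvPowerSeries.coeff_zero_eq_constantCoeff, hG0 j]
    have hHmem : ∀ d : Fin n →₀ ℕ,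
        MvPowerSeries.coeff e (∏ k, H k ^ d k) ∈ R := by
      intro d
      have : (∏ k, H k ^ d k) =
          MvPowerSeries.map R.subtype (∏ k, H0 k ^ d k) := by
        rw [map_prod]
        exact Finset.prod_congr rfl fun k _ => by rw [map_pow]
      rw [this, MvPowerSeries.coeff_map]
      exact SetLike.coe_mem _
    -- vanishing of high-order terms
    have hvan : ∀ d : Fin n →₀ ℕ, m < wt d →
        MvPowerSeries.coeff e (∏ j, G j ^ d j) = 0 := by
      intro d hd
      rw [prod_pow_flatten]
      exact coeff_prod_eq_zero _ _ (fun p _ => hG0 p.1) e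
        (by rw [card_flatten]; omega)
    -- replacing G by H in quadratic and higher terms
    have hGH : ∀ d : Fin n →₀ ℕ, 2 ≤ wt d →
        MvPowerSeries.coeff e (∏ j, G j ^ d j) =
        MvPowerSeries.coeff e (∏ j, H j ^ d j) := by
      intro d hd
      rw [prod_pow_flatten, prod_pow_flatten]
      exact coeff_prod_congr _ _ _ m (fun p _ => hG0 p.1) (fun p _ => hH0' p.1)
        (fun p _ u hu => (hHG p.1 u hu).symm) (by rw [card_flatten]; omega) e (le_of_eq he)
    -- the bound monomial
    set b : Fin n →₀ ℕ := Finsupp.equivFunOnFinite.symm (fun _ : Fin n => m) with hbdef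
    have hb : ∀ d : Fin n →₀ ℕ, wt d ≤ m → d ∈ Finset.Iic b := by
      intro d hd
      rw [Finset.mem_Iic]
      intro j
      have := apply_le_wt d j
      calc d j ≤ m := le_trans this hd
        _ = b j := by rw [hbdef]; rfl
    set singles : Finset (Fin n →₀ ℕ) :=
      Finset.image (fun j : Fin n => Finsupp.single j 1) Finset.univ with hsdef
    have hsingles_sub : singles ⊆ Finset.Iic b := by
      intro d hd
      rw [hsdef, Finset.mem_image] at hd
      obtain ⟨j, _, rfl⟩ := hd
      exact hb _ (by rw [wt_single_one]; omega)
    -- the key relation coming from F ∘ G = X, for each row i'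
    have hrow : ∀ i',
        (∑ j, ((A i' j : R) : S) * MvPowerSeries.coeff e (G j)) ∈ R := by
      intro i'
      set a : (Fin n →₀ ℕ) → S := fun d =>
        MvPowerSeries.coeff d (F' i') * MvPowerSeries.coeff e (∏ j, G j ^ d j)
        with hadef
      have hEq : (∑ᶠ d : Fin n →₀ ℕ, a d) = MvPowerSeries.coeff e (MvPowerSeries.X i') := by
        rw [← hFG i']
        rfl
      have hsupp : Function.support a ⊆ ↑(Finset.Iic b) := by
        intro d hd
        have hne : MvPowerSeries.coeff e (∏ j, G j ^ d j) ≠ 0 := by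
          intro h0
          apply hd
          rw [hadef]
          simp only [h0, mul_zero]
        have hdm : wt d ≤ m := by
          by_contra h
          exact hne (hvan d (by omega))
        exact hb d hdm
      have hsum : ∑ d ∈ Finset.Iic b, a d = MvPowerSeries.coeff e (MvPowerSeries.X i') := by
        rw [← finsum_eq_sum_of_support_subset a hsupp]
        exact hEq
      have hsplit : ∑ d ∈ Finset.Iic b \ singles, a d + ∑ d ∈ singles, a d
          = ∑ d ∈ Finset.Iic b, a d := Finset.sum_sdiff hsingles_sub
      have hrest : ∑ d ∈ Finset.Iic b \ singles, a d ∈ R := by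
        apply Subring.sum_mem
        intro d hd
        rw [Finset.mem_sdiff] at hd
        rcases Nat.lt_or_ge (wt d) 2 with h2 | h2
        · interval_cases h : wt d
          · rw [hadef]
            simp only [wt_eq_zero h, MvPowerSeries.coeff_zero_eq_constantCoeff, hF'0 i',
              zero_mul]
            exact zero_mem R
          · obtain ⟨j, rfl⟩ := wt_eq_one h
            exact absurd (by rw [hsdef]; exact Finset.mem_image_of_mem _ (mem_univ j)) hd.2
        · simp only [hadef]
          rw [hGH d h2]
          exact mul_mem (hF'mem i' d) (hHmem d)
      have hXmem : MvPowerSeries.coeff e (MvPowerSeries.X i' : MvPowerSeries (Fin n) S) ∈ R := by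
        rw [MvPowerSeries.coeff_X]
        split
        · exact one_mem R
        · exact zero_mem R
      have hsingle_sum : ∑ d ∈ singles, a d
          = ∑ j, ((A i' j : R) : S) * MvPowerSeries.coeff e (G j) := by
        rw [hsdef, Finset.sum_image (fun x _ y _ h =>
          Finsupp.single_left_injective one_ne_zero h)]
        apply Finset.sum_congr rfl
        intro j _
        have hprod : (∏ k, G k ^ (Finsupp.single j 1) k) = G j := by
          rw [Finset.prod_eq_single j]
          · rw [Finsupp.single_eq_same, pow_one]
          · intro k _ hk
            rw [Finsupp.single_eq_of_ne hk, pow_zero]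
          · simp
        simp only [hadef]
        rw [hprod, hA' i' j]
      have : ∑ d ∈ singles, a d ∈ R := by
        have h1 : ∑ d ∈ singles, a d
            = MvPowerSeries.coeff e (MvPowerSeries.X i')
              - ∑ d ∈ Finset.Iic b \ singles, a d := by
          rw [← hsum, ← hsplit]; ring
        rw [h1]
        exact sub_mem hXmem hrest
      rwa [hsingle_sum] at this
    -- invert the linear part
    have hv : (∑ i', ((B i i' : R) : S)
          * ∑ j, ((A i' j : R) : S) * MvPowerSeries.coeff e (G j))
        = MvPowerSeries.coeff e (G i) := by
      calc ∑ i', ((B i i' : R) : S) * ∑ j, ((A i' j : R) : S) * MvPowerSeries.coeff e (G j)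
          = ∑ i', ∑ j, (((B i i' : R) : S) * ((A i' j : R) : S))
              * MvPowerSeries.coeff e (G j) := by
            simp only [Finset.mul_sum, mul_assoc]
        _ = ∑ j, ∑ i', (((B i i' : R) : S) * ((A i' j : R) : S))
              * MvPowerSeries.coeff e (G j) := Finset.sum_comm
        _ = ∑ j, (∑ i', ((B i i' : R) : S) * ((A i' j : R) : S))
              * MvPowerSeries.coeff e (G j) := by
            simp only [Finset.sum_mul]
        _ = ∑ j, (((B * A) i j : R) : S) * MvPowerSeries.coeff e (G j) := by
            refine Finset.sum_congr rfl fun j _ => ?_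
            congr 1
            rw [Matrix.mul_apply]
            push_cast
            rfl
        _ = MvPowerSeries.coeff e (G i) := by
            rw [hBA]
            simp [Matrix.one_apply, apply_ite ((↑) : R → S), ite_mul]
    rw [← hv]
    exact Subring.sum_mem _ fun i' _ =>
      mul_mem (SetLike.coe_mem _) (hrow i')
  intro i d
  exact key (wt d) d rfl i
end
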